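/- Let $\mu$ be a root of $\mu^2-(\nu_1-\nu_2)\lambda\mu-\nu_1\nu_2=0$ where $|\nu_1|=|\nu_2|=1$ and $\lambda\in[-1,1]$. Then $|\mu|=1$ and $\mu=(-\nu_1\nu_2)^{1/2}e^{\pm i\theta}$ for some $\theta$ with $\cos\theta=-\Im(\nu_1^{1/2}\overline{\nu_2}^{1/2})\lambda$ (for appropriate choices of square roots). -/

import Mathlib

theorem stmt_10 (ν₁ ν₂ μ : ℂ) (hν₁ : ‖ν₁‖ = 1) (hν₂ : ‖ν₂‖ = 1)
    (lam : ℝ) (hlam : -1 ≤ lam ∧ lam ≤ 1)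
    (hroot : μ ^ 2 - (ν₁ - ν₂) * (lam : ℂ) * μ - ν₁ * ν₂ = 0) :
    ‖μ‖ = 1 ∧
    ∃ (s r : ℂ) (θ : ℝ), s ^ 2 = -(ν₁ * ν₂) ∧ r ^ 2 = ν₁ * (starRingEnd ℂ ν₂) ∧
      Real.cos θ = -(r.im) * lam ∧
      (μ = s * Complex.exp (θ * Complex.I) ∨ μ = s * Complex.exp (-θ * Complex.I)) := by
  obtain ⟨r, hr2⟩ := IsAlgClosed.exists_pow_nat_eq (ν₁ * (starRingEnd ℂ ν₂)) (n := 2) (by norm_num)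
  have hI : Complex.I ^ 2 = -1 := Complex.I_sq
  have hν₂c : ν₂ * (starRingEnd ℂ ν₂) = 1 := by
    rw [Complex.mul_conj]
    norm_cast
    rw [Complex.normSq_eq_norm_sq]
    simp [hν₂]
  have hrnorm : ‖r‖ = 1 := by
    have h : ‖r‖ ^ 2 = 1 := by
      rw [← norm_pow, hr2, norm_mul, hν₁, RCLike.norm_conj, hν₂]; norm_num
    nlinarith [norm_nonneg r]
  have hrc : r * (starRingEnd ℂ r) = 1 := by
    rw [Complex.mul_conj]
    norm_cast
    rw [Complex.normSq_eq_norm_sq]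
    simp [hrnorm]
  have hsub : r - (starRingEnd ℂ r) = 2 * r.im * Complex.I := by rw [Complex.sub_conj]; push_cast; ring
  set s : ℂ := -Complex.I * ν₂ * r with hs
  have hs2 : s ^ 2 = -(ν₁ * ν₂) := by
    rw [hs]
    linear_combination (ν₂^2*r^2) * hI + (-ν₂^2) * hr2 + (-(ν₁*ν₂)) * hν₂c
  have hK : (2 * (r.im : ℂ)) * s = -(ν₁ - ν₂) := by
    rw [hs]
    linear_combination (ν₂*r) * hsub + (-ν₂) * hr2 + ν₂ * hrc + (-ν₁) * hν₂c
  have him : |r.im| ≤ 1 := by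
    have := Complex.abs_im_le_norm r
    rwa [hrnorm] at this
  have hlam' : |lam| ≤ 1 := abs_le.mpr hlam
  set c : ℝ := r.im * lam with hc
  have hcle : |c| ≤ 1 := by
    rw [hc, abs_mul]
    calc |r.im| * |lam| ≤ 1 * 1 := by
          apply mul_le_mul him hlam' (abs_nonneg _) zero_le_one
      _ = 1 := by norm_num
  set θ : ℝ := Real.arccos (-c) with hθ
  have hcos : Real.cos θ = -c :=
    Real.cos_arccos (by linarith [abs_le.mp hcle]) (by linarith [abs_le.mp hcle])
  have hsinsq : Real.sin θ ^ 2 = 1 - c ^ 2 := by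
    have := Real.sin_sq_add_cos_sq θ
    rw [hcos] at this
    nlinarith [this]
  have hsinC : ((Real.sin θ : ℂ)) ^ 2 = 1 - (c : ℂ) ^ 2 := by
    exact_mod_cast congrArg (Complex.ofReal) hsinsq
  have hcC : (c : ℂ) = (r.im : ℂ) * (lam : ℂ) := by push_cast [hc]; ring
  have h2cs : 2*(c:ℂ)*s = -(ν₁-ν₂)*(lam:ℂ) := by
    rw [hcC]; linear_combination (lam : ℂ) * hK
  have hq0 : (μ + (c:ℂ)*s)^2 = s^2*((c:ℂ)^2 - 1) := by
    linear_combination hroot + μ * h2cs + hs2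
  have hq : (μ + (c : ℂ) * s - s * (Real.sin θ : ℂ) * Complex.I) *
      (μ + (c : ℂ) * s + s * (Real.sin θ : ℂ) * Complex.I) = 0 := by
    linear_combination hq0 + (-s^2*(Real.sin θ : ℂ)^2) * hI + s^2 * hsinC
  have hexp1 : Complex.exp ((θ : ℂ) * Complex.I) = ((Real.cos θ : ℂ)) + ((Real.sin θ : ℂ)) * Complex.I := by
    rw [Complex.exp_mul_I, Complex.ofReal_cos, Complex.ofReal_sin]
  have hexp2 : Complex.exp (-(θ : ℂ) * Complex.I) = ((Real.cos θ : ℂ)) - ((Real.sin θ : ℂ)) * Complex.I := by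
    rw [Complex.exp_mul_I, Complex.cos_neg, Complex.sin_neg, Complex.ofReal_cos, Complex.ofReal_sin]
    ring
  have hcosC : ((Real.cos θ : ℝ) : ℂ) = -(c : ℂ) := by
    rw [hcos]; push_cast; ring
  have hμ : μ = s * Complex.exp ((θ : ℂ) * Complex.I) ∨
      μ = s * Complex.exp (-(θ : ℂ) * Complex.I) := by
    rcases mul_eq_zero.mp hq with h | h
    · left
      rw [hexp1, hcosC]
      linear_combination h
    · right
      rw [hexp2, hcosC]
      linear_combination h
  have hsnorm : ‖s‖ = 1 := by
    rw [hs]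
    simp [hν₂, hrnorm]
  have hnormμ : ‖μ‖ = 1 := by
    rcases hμ with h | h <;> rw [h, norm_mul, hsnorm, one_mul]
    · rw [Complex.norm_exp_ofReal_mul_I]
    · rw [show -(θ : ℂ) = ((-θ : ℝ) : ℂ) by push_cast; ring,
        Complex.norm_exp_ofReal_mul_I]
  refine ⟨hnormμ, s, r, θ, hs2, hr2, ?_, hμ⟩
  rw [hcos, hc]; ring
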